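/- Let ρ ≤ λ be infinite cardinals. For every f : λ → ρ, ds(f) ≤ m(ρ, λ). -/

import Mathlib

open Cardinal

noncomputable section

/-- The covering number `cov(ρ₁, ρ₂, ρ₃, ρ₄)`: least cardinality of `X ⊆ P_{ρ₂}(ρ₁)`
such that every `b ∈ P_{ρ₃}(ρ₁)` is covered by the union of fewer than `ρ₄` members of `X`. -/
def cov (r1 r2 r3 r4 : Cardinal) : Cardinal :=
  sInf { c | ∃ X : Set (Set r1.out),
    (∀ x ∈ X, #x < r2) ∧
    (∀ b : Set r1.out, #b < r3 → ∃ Q : Set (Set r1.out), Q ⊆ X ∧ #Q < r4 ∧ b ⊆ ⋃₀ Q) ∧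
    #X = c }

/-- The meeting number `m(ρ, λ)`. -/
def meet (ρ lam : Cardinal) : Cardinal :=
  sInf { c | ∃ Q : Set (Set lam.out),
    (∀ q ∈ Q, #q = ρ) ∧
    (∀ b : Set lam.out, #b = ρ → ∃ q ∈ Q, #(↥(b ∩ q)) = ρ) ∧
    #Q = c }

/-- The density number `d(ρ, λ)`. -/
def dens (ρ lam : Cardinal) : Cardinal :=
  sInf { c | ∃ Q : Set (Set lam.out),
    (∀ q ∈ Q, #q = ρ) ∧
    (∀ b : Set lam.out, #b = ρ → ∃ q ∈ Q, q ⊆ b) ∧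
    #Q = c }

/-- `ds(f)` for `f : λ → ρ`. -/
def ds (ρ lam : Cardinal) (f : lam.out → ρ.out) : Cardinal :=
  sInf { c | ∃ Z : Set (Set lam.out),
    (∀ z ∈ Z, #z = ρ) ∧
    (∀ B : Set lam.out, (∀ α : ρ.out, #(↥(B ∩ f ⁻¹' {α})) = lam) →
      ∃ z ∈ Z, #(↥(f '' (z ∩ B))) = ρ) ∧
    #Z = c }

/-- The Džamonja–Shelah number `DS(ρ, λ) = sup { ds(f) : f : λ → ρ }`. -/
def DS (ρ lam : Cardinal) : Cardinal := ⨆ f : lam.out → ρ.out, ds ρ lam f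

/-- Cofinality of a cardinal. -/
def cf (c : Cardinal) : Cardinal := c.ord.cof

/-- `u(σ, λ) = cov(λ, σ, σ, ω)`. -/
def u (σ lam : Cardinal) : Cardinal := cov lam σ σ ℵ₀

/-- The `o`-th iterated cardinal successor of `c`. -/
def succIter (c : Cardinal) (o : Ordinal) : Cardinal :=
  Cardinal.preAleph (Cardinal.preAleph.symm c + o)


theorem stmt1 (ρ lam : Cardinal) (hρ : ℵ₀ ≤ ρ) (hle : ρ ≤ lam)
    (f : lam.out → ρ.out) : ds ρ lam f ≤ meet ρ lam := by
  have hlam : ℵ₀ ≤ lam := hρ.trans hle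
  have hρρ : #ρ.out = ρ := mk_out ρ
  apply csInf_le_csInf
  · exact ⟨0, fun c _ => zero_le⟩
  · refine ⟨#{q : Set lam.out | #q = ρ}, {q | #q = ρ}, fun q hq => hq, ?_, rfl⟩
    exact fun b hb => ⟨b, hb, by rwa [Set.inter_self b]⟩
  · rintro c ⟨Q, hQ1, hQ2, hQ3⟩
    refine ⟨Q, hQ1, ?_, hQ3⟩
    intro B hB
    have hne : ∀ α : ρ.out, (B ∩ f ⁻¹' {α}).Nonempty := by
      intro α
      rw [← Set.nonempty_coe_sort, ← Cardinal.mk_ne_zero_iff, hB α]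
      exact fun h => aleph0_ne_zero (le_zero_iff.mp (h ▸ hlam))
    choose g hg using hne
    have hfg : ∀ α, f (g α) = α := fun α => (hg α).2
    have hgB : ∀ α, g α ∈ B := fun α => (hg α).1
    have hginj : Function.Injective g := by
      intro a b hab
      have := congrArg f hab
      rwa [hfg, hfg] at this
    set b : Set lam.out := Set.range g with hb
    have hbB : b ⊆ B := Set.range_subset_iff.mpr hgB
    have hbρ : #b = ρ := by rw [hb, Cardinal.mk_range_eq g hginj, hρρ]
    obtain ⟨q, hqQ, hq⟩ := hQ2 b hbρ
    refine ⟨q, hqQ, le_antisymm ?_ ?_⟩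
    · calc #(↥(f '' (q ∩ B))) ≤ #ρ.out := Cardinal.mk_set_le _
        _ = ρ := hρρ
    · have hinj : Set.InjOn f (q ∩ b) := by
        rintro x ⟨_, a, rfl⟩ y ⟨_, c, rfl⟩ hxy
        rw [hfg, hfg] at hxy
        rw [hxy]
      calc ρ = #(↥(b ∩ q)) := hq.symm
        _ = #(↥(q ∩ b)) := by rw [Set.inter_comm]
        _ = #(↥(f '' (q ∩ b))) := (Cardinal.mk_image_eq_of_injOn f _ hinj).symm
        _ ≤ #(↥(f '' (q ∩ B))) :=
          Cardinal.mk_le_mk_of_subset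
            (Set.image_mono (f := f) (Set.inter_subset_inter_right q hbB))
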